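/- Let n ≥ 6 be an integer and j a real number such that 2j is a nonnegative integer with n − 2j a positive even integer, and set k = n/2 − j. Let X_1, …, X_k be independent geometric random variables where X_r has success parameter e_{j'_r}(j) with j'_r = n/2 − r + 1. Then for every real T ≥ n·ln(n/2) + n/(ln(n/2) − ln(ln(n/2))), the probability P(X_1 + ⋯ + X_k > T) ≤ n·exp(−T/(2n)). -/

import Mathlib

open MeasureTheory ProbabilityTheory
open scoped ENNReal NNReal

set_option maxHeartbeats 1000000

/-- The probability `e_{j'}(j)` that a random SWAP test on `2j'` qubits in the
angular-momentum-`j` sector detects a singlet. -/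
noncomputable def eprob (j' j : ℝ) : ℝ :=
  (j' * (j' + 1) - j * (j + 1)) / (2 * j' * (2 * j' - 1))

section aux

variable {Ω : Type*} [MeasurableSpace Ω]

lemma lintegral_prod_of_indep {ι : Type*} (P : Measure Ω) [IsProbabilityMeasure P]
    (g : ι → Ω → ℝ≥0∞) (hg : ∀ i, Measurable (g i))
    (hindep : iIndepFun g P) (s : Finset ι) :
    ∫⁻ ω, ∏ i ∈ s, g i ω ∂P = ∏ i ∈ s, ∫⁻ ω, g i ω ∂P := by
  classical
  induction s using Finset.induction_on with
  | empty => simp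
  | @insert a s' hnotmem ih =>
    have hIndep : IndepFun (∏ j ∈ s', g j) (g a) P :=
      hindep.indepFun_finsetProd_of_notMem hg hnotmem
    have hmeas : Measurable (∏ j ∈ s', g j) := by
      rw [Finset.prod_fn]
      exact s'.measurable_prod fun i _ => hg i
    calc ∫⁻ ω, ∏ i ∈ insert a s', g i ω ∂P
        = ∫⁻ ω, ((∏ j ∈ s', g j) * g a) ω ∂P := by
          apply lintegral_congr; intro ω
          simp [Finset.prod_insert hnotmem, Finset.prod_apply, mul_comm]
      _ = (∫⁻ ω, (∏ j ∈ s', g j) ω ∂P) * ∫⁻ ω, g a ω ∂P :=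
          lintegral_mul_eq_lintegral_mul_lintegral_of_indepFun hmeas (hg a) hIndep
      _ = ∏ i ∈ insert a s', ∫⁻ ω, g i ω ∂P := by
          rw [Finset.prod_insert hnotmem, ← ih, mul_comm]
          congr 1
          apply lintegral_congr; intro ω
          simp [Finset.prod_apply]

lemma lintegral_pow_geometric (P : Measure Ω) [IsProbabilityMeasure P]
    (X : Ω → ℕ) (hX : Measurable X) (p z : ℝ)
    (hp0 : 0 < p) (hp1 : p ≤ 1) (hz0 : 0 ≤ z) (hzp : z * (1 - p) < 1)
    (h : ∀ t : ℕ, 1 ≤ t → P {ω | X ω = t} = ENNReal.ofReal (p * (1 - p) ^ (t - 1))) :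
    ∫⁻ ω, ENNReal.ofReal z ^ X ω ∂P
      = ENNReal.ofReal (z * p / (1 - z * (1 - p))) := by
  have hp1' : 0 ≤ 1 - p := by linarith
  have hkey : ∀ f : ℕ → ℝ≥0∞, ∫⁻ ω, f (X ω) ∂P = ∑' t, f t * P {ω | X ω = t} := by
    intro f
    rw [← lintegral_map (measurable_of_countable f) hX, lintegral_countable']
    refine tsum_congr fun t => ?_
    rw [Measure.map_apply hX (measurableSet_singleton t)]
    rfl
  have hmeasset : ∀ t : ℕ, MeasurableSet {ω | X ω = t} :=
    fun t => hX (measurableSet_singleton t)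
  have htail : ∑' s : ℕ, P {ω | X ω = s + 1} = 1 := by
    have h1 : ∀ s : ℕ, P {ω | X ω = s + 1} = ENNReal.ofReal (p * (1 - p) ^ s) := by
      intro s
      rw [h (s + 1) (by omega)]
      simp
    rw [tsum_congr h1,
      ← ENNReal.ofReal_tsum_of_nonneg (fun s => by positivity)
        ((summable_geometric_of_lt_one hp1' (by linarith)).mul_left p)]
    rw [tsum_mul_left, tsum_geometric_of_lt_one hp1' (by linarith)]
    have : (1 : ℝ) - (1 - p) = p := by ring
    rw [this, mul_inv_cancel₀ hp0.ne', ENNReal.ofReal_one]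
  have hzero : P {ω | X ω = 0} = 0 := by
    have hdisj : Pairwise (Function.onFun Disjoint fun t : ℕ => {ω | X ω = t}) := by
      intro a b hab
      exact Set.disjoint_left.2 fun ω h1 h2 => hab ((h1 : X ω = a).symm.trans h2)
    have hsum : ∑' t : ℕ, P {ω | X ω = t} = 1 := by
      rw [← measure_iUnion hdisj hmeasset]
      have : (⋃ t : ℕ, {ω | X ω = t}) = Set.univ := by
        ext ω; simp
      rw [this, measure_univ]
    rw [tsum_eq_zero_add' ENNReal.summable, htail] at hsum
    have h2 : P {ω | X ω = 0} + 1 = 0 + 1 := by rw [hsum, zero_add]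
    exact (ENNReal.add_left_inj (by norm_num)).1 h2
  have hr0 : (0:ℝ) ≤ z * (1 - p) := by positivity
  rw [hkey, tsum_eq_zero_add' ENNReal.summable, hzero, mul_zero, zero_add]
  have hterm : ∀ s : ℕ, ENNReal.ofReal z ^ (s + 1) * P {ω | X ω = s + 1}
      = ENNReal.ofReal ((z * p) * (z * (1 - p)) ^ s) := by
    intro s
    rw [h (s + 1) (by omega)]
    simp only [Nat.add_sub_cancel]
    rw [← ENNReal.ofReal_pow hz0, ← ENNReal.ofReal_mul (by positivity)]
    congr 1
    rw [mul_pow, pow_succ]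
    ring
  rw [tsum_congr hterm,
    ← ENNReal.ofReal_tsum_of_nonneg (fun s => by positivity)
      ((summable_geometric_of_lt_one hr0 hzp).mul_left _),
    tsum_mul_left, tsum_geometric_of_lt_one hr0 hzp, div_eq_mul_inv]

end aux


lemma chTerm_prod_le (A : ℝ) (hA : 0 ≤ A) (M : ℕ) (hM : 1 ≤ M) :
    ∏ idx ∈ Finset.range M,
        (((idx : ℝ) + 1) * (A + idx + 2) / ((idx : ℝ) * (A + idx + 1) + 1))
      ≤ M * (A + M + 1) := by
  induction M, hM using Nat.le_induction with
  | base =>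
    rw [Finset.prod_range_one]
    push_cast
    rw [show ((0:ℝ) * (A + 0 + 1) + 1) = 1 by ring, div_one]
    nlinarith
  | succ M hM ih =>
    rw [Finset.prod_range_succ]
    have hd : (0:ℝ) < (M:ℝ) * (A + M + 1) + 1 := by positivity
    have hterm : (0:ℝ) ≤ ((M:ℝ) + 1) * (A + M + 2) / ((M:ℝ) * (A + M + 1) + 1) := by
      positivity
    refine le_trans (mul_le_mul_of_nonneg_right ih hterm) ?_
    push_cast
    rw [← mul_div_assoc, div_le_iff₀ hd]
    nlinarith [mul_nonneg (mul_nonneg (Nat.cast_nonneg (α := ℝ) M) (by linarith : (0:ℝ) ≤ A + M + 1)) (by positivity : (0:ℝ) ≤ ((M:ℝ)+1)*(A+M+2))]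


/-- If `n ≥ 6`, `2j` is a nonnegative integer, `n - 2j = 2k` is a positive even integer,
and `X 1, …, X k` are independent geometric random variables where `X r` has success
parameter `e_{j'_r}(j)` with `j'_r = n/2 - r + 1`, then for every real
`T ≥ n·ln(n/2) + n/(ln(n/2) - ln(ln(n/2)))`, one has
`P(X 1 + ⋯ + X k > T) ≤ n·exp(-T/(2n))`. -/
theorem swap_test_error_exponential_decay
    {Ω : Type*} [MeasurableSpace Ω] (P : Measure Ω) [IsProbabilityMeasure P]
    (n : ℕ) (hn : 6 ≤ n) (j : ℝ) (h2j : ∃ m : ℕ, (m : ℝ) = 2 * j)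
    (k : ℕ) (hk : 0 < k) (hkj : (n : ℝ) - 2 * j = 2 * k)
    (X : Fin k → Ω → ℕ) (hXmeas : ∀ i, Measurable (X i))
    (hindep : iIndepFun X P)
    (hgeom : ∀ i : Fin k, ∀ t : ℕ, 1 ≤ t →
      P {ω | X i ω = t} = ENNReal.ofReal
        (eprob ((n : ℝ) / 2 - i) j * (1 - eprob ((n : ℝ) / 2 - i) j) ^ (t - 1)))
    (T : ℝ)
    (hT : n * Real.log (n / 2) + n / (Real.log (n / 2) - Real.log (Real.log (n / 2))) ≤ T) :
    (P {ω | T < ∑ i, (X i ω : ℝ)}).toReal ≤ n * Real.exp (-(T / (2 * n))) := by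
  by_cases hcase : 1 ≤ (n : ℝ) * Real.exp (-(T / (2 * n)))
  · refine le_trans ?_ hcase
    have h1 : P {ω | T < ∑ i, (X i ω : ℝ)} ≤ 1 := prob_le_one
    calc (P {ω | T < ∑ i, (X i ω : ℝ)}).toReal ≤ (1 : ℝ≥0∞).toReal :=
          ENNReal.toReal_mono (by norm_num) h1
      _ = 1 := by norm_num
  push_neg at hcase
  -- setup
  have hN6 : (6 : ℝ) ≤ (n : ℝ) := by exact_mod_cast hn
  have hN0 : (0 : ℝ) < n := by linarith
  have hN1 : (1 : ℝ) < n := by linarith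
  obtain ⟨m0, hm0⟩ := h2j
  have hA0 : (0 : ℝ) ≤ 2 * j := by rw [← hm0]; positivity
  have hNA : (n : ℝ) = 2 * j + 2 * k := by linarith
  have hk1 : (1 : ℝ) ≤ (k : ℝ) := by exact_mod_cast hk
  set z : ℝ := (n : ℝ) / ((n : ℝ) - 1) with hzdef
  have hzpos : 0 < z := by rw [hzdef]; exact div_pos hN0 (by linarith)
  have hz1 : 1 < z := by
    rw [hzdef, lt_div_iff₀ (by linarith)]; linarith
  have hz0 : (0 : ℝ) ≤ z := le_of_lt hzpos
  -- the random variables transformed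
  set g : Fin k → Ω → ℝ≥0∞ := fun i => (fun t : ℕ => ENNReal.ofReal z ^ t) ∘ X i with hgdef
  have hgmeas : ∀ i, Measurable (g i) := fun i => (measurable_of_countable _).comp (hXmeas i)
  have hgindep : iIndepFun g P :=
    hindep.comp _ fun i => measurable_of_countable _
  set p : Fin k → ℝ := fun i => eprob ((n : ℝ) / 2 - i) j with hpdef
  -- per-variable facts
  have hfacts : ∀ i : Fin k,
      (∫⁻ ω, g i ω ∂P = ENNReal.ofReal ((n : ℝ) * p i / ((n : ℝ) * p i - 1))) ∧
      (0 : ℝ) ≤ (n : ℝ) * p i / ((n : ℝ) * p i - 1) ∧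
      (n : ℝ) * p i / ((n : ℝ) * p i - 1) ≤
        ((k : ℝ) - i) * (2 * j + ((k : ℝ) - i) + 1) /
          ((((k : ℝ) - i) - 1) * (2 * j + ((k : ℝ) - i)) + 1) := by
    intro i
    set c : ℝ := (k : ℝ) - i with hcdef
    have hik : (i : ℕ) + 1 ≤ k := i.2
    have hc1 : (1 : ℝ) ≤ c := by
      rw [hcdef]
      have : ((i : ℕ) : ℝ) + 1 ≤ (k : ℝ) := by exact_mod_cast hik
      simpa using by linarith
    have hck : c ≤ (k : ℝ) := by
      rw [hcdef]
      have : (0 : ℝ) ≤ ((i : ℕ) : ℝ) := Nat.cast_nonneg _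
      simpa using by linarith
    have hD0 : (0 : ℝ) < (2 * j + 2 * c) * (2 * j + 2 * c - 1) := by nlinarith
    have hpeq : p i = c * (2 * j + c + 1) / ((2 * j + 2 * c) * (2 * j + 2 * c - 1)) := by
      rw [hpdef]
      simp only
      have h1 : (n : ℝ) / 2 - i = j + c := by rw [hcdef, hNA]; ring
      rw [eprob, h1]
      congr 1 <;> ring
    have hnum0 : (0 : ℝ) < c * (2 * j + c + 1) := by nlinarith
    have hp0 : 0 < p i := by rw [hpeq]; positivity
    have hp1 : p i ≤ 1 := by
      rw [hpeq, div_le_one hD0]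
      nlinarith
    have hu2 : c * (2 * j + c + 1) ≤ (n : ℝ) * p i * (2 * j + 2 * c - 1) := by
      rw [hpeq]
      have hd2 : (0 : ℝ) < 2 * j + 2 * c := by nlinarith
      have hd3 : (0 : ℝ) < 2 * j + 2 * c - 1 := by nlinarith
      have heq : (n : ℝ) * (c * (2 * j + c + 1) / ((2 * j + 2 * c) * (2 * j + 2 * c - 1)))
          * (2 * j + 2 * c - 1) = (n : ℝ) * (c * (2 * j + c + 1)) / (2 * j + 2 * c) := by
        rw [mul_assoc, div_mul_eq_mul_div, mul_div_mul_right _ _ hd3.ne']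
        ring
      rw [heq, le_div_iff₀ hd2]
      have hcn : 2 * j + 2 * c ≤ (n : ℝ) := by rw [hNA]; linarith
      nlinarith [mul_le_mul_of_nonneg_left hcn (le_of_lt hnum0)]
    have hu1 : 1 < (n : ℝ) * p i := by nlinarith
    have hzp : z * (1 - p i) < 1 := by
      rw [hzdef, div_mul_eq_mul_div, div_lt_one (by linarith)]
      nlinarith
    have hzp' : 0 < 1 - z * (1 - p i) := by linarith
    have hne2 : (n : ℝ) * p i - 1 ≠ 0 := by nlinarith
    have hval : z * p i / (1 - z * (1 - p i)) = (n : ℝ) * p i / ((n : ℝ) * p i - 1) := by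
      rw [div_eq_div_iff (ne_of_gt hzp') hne2, hzdef]
      have hne : (n : ℝ) - 1 ≠ 0 := by linarith
      field_simp
      ring
    have hint : ∫⁻ ω, g i ω ∂P = ENNReal.ofReal ((n : ℝ) * p i / ((n : ℝ) * p i - 1)) := by
      have := lintegral_pow_geometric P (X i) (hXmeas i) (p i) z hp0 hp1 hz0 hzp
        (fun t ht => hgeom i t ht)
      rw [← hval]
      exact this
    refine ⟨hint, le_of_lt (div_pos (by nlinarith) (by linarith)), ?_⟩
    have hdd : (0 : ℝ) < (c - 1) * (2 * j + c) + 1 := by nlinarith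
    rw [div_le_div_iff₀ (by linarith) hdd]
    nlinarith [hu2]
  -- Markov / Chernoff
  set f : Ω → ℝ≥0∞ := fun ω => ∏ i, g i ω with hfdef
  have hfmeas : Measurable f := Finset.measurable_prod Finset.univ fun i _ => hgmeas i
  have hzT : 0 < z ^ T := Real.rpow_pos_of_pos hzpos T
  set ε : ℝ≥0∞ := ENNReal.ofReal (z ^ T) with hεdef
  have hε0 : ε ≠ 0 := (ENNReal.ofReal_pos.mpr hzT).ne'
  have hεtop : ε ≠ ⊤ := ENNReal.ofReal_ne_top
  have hsub : {ω | T < ∑ i, (X i ω : ℝ)} ⊆ {ω | ε ≤ f ω} := by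
    intro ω hω
    have hω' : T < ∑ i, (X i ω : ℝ) := hω
    have hfval : f ω = ENNReal.ofReal (z ^ (∑ i, X i ω : ℕ)) := by
      rw [hfdef]
      simp only [hgdef, Function.comp_apply]
      rw [Finset.prod_pow_eq_pow_sum, ENNReal.ofReal_pow hz0]
    have hcast : T ≤ ((∑ i, X i ω : ℕ) : ℝ) := by
      push_cast
      exact le_of_lt hω'
    have hmono : z ^ T ≤ z ^ ((∑ i, X i ω : ℕ) : ℝ) :=
      (Real.rpow_le_rpow_left_iff hz1).mpr hcast
    rw [Real.rpow_natCast] at hmono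
    show ε ≤ f ω
    rw [hfval, hεdef]
    exact ENNReal.ofReal_le_ofReal hmono
  have hmarkov : P {ω | T < ∑ i, (X i ω : ℝ)} ≤ ε⁻¹ * ∫⁻ ω, f ω ∂P := by
    have h1 : ε * P {ω | ε ≤ f ω} ≤ ∫⁻ ω, f ω ∂P :=
      mul_meas_ge_le_lintegral₀ hfmeas.aemeasurable ε
    calc P {ω | T < ∑ i, (X i ω : ℝ)} ≤ P {ω | ε ≤ f ω} := measure_mono hsub
      _ = ε⁻¹ * (ε * P {ω | ε ≤ f ω}) := by
          rw [← mul_assoc, ENNReal.inv_mul_cancel hε0 hεtop, one_mul]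
      _ ≤ ε⁻¹ * ∫⁻ ω, f ω ∂P := mul_le_mul_right h1 _
  have hprod : ∫⁻ ω, f ω ∂P = ENNReal.ofReal (∏ i, (n : ℝ) * p i / ((n : ℝ) * p i - 1)) := by
    rw [hfdef]
    rw [lintegral_prod_of_indep P g hgmeas hgindep Finset.univ]
    rw [Finset.prod_congr rfl fun i _ => (hfacts i).1]
    rw [← ENNReal.ofReal_prod_of_nonneg fun i _ => (hfacts i).2.1]
  -- real product bound
  have hprodR : ∏ i : Fin k, ((n : ℝ) * p i / ((n : ℝ) * p i - 1)) ≤ (k : ℝ) * (2 * j + k + 1) := by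
    have step1 : ∏ i : Fin k, ((n : ℝ) * p i / ((n : ℝ) * p i - 1)) ≤
        ∏ i : Fin k, (((k : ℝ) - i) * (2 * j + ((k : ℝ) - i) + 1) /
          ((((k : ℝ) - i) - 1) * (2 * j + ((k : ℝ) - i)) + 1)) :=
      Finset.prod_le_prod (fun i _ => (hfacts i).2.1) (fun i _ => (hfacts i).2.2)
    refine le_trans step1 ?_
    have step2 : ∏ i : Fin k, (((k : ℝ) - i) * (2 * j + ((k : ℝ) - i) + 1) /
          ((((k : ℝ) - i) - 1) * (2 * j + ((k : ℝ) - i)) + 1))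
        = ∏ idx ∈ Finset.range k, (((k : ℝ) - idx) * (2 * j + ((k : ℝ) - idx) + 1) /
          ((((k : ℝ) - idx) - 1) * (2 * j + ((k : ℝ) - idx)) + 1)) :=
      Fin.prod_univ_eq_prod_range
        (fun idx : ℕ => ((k : ℝ) - idx) * (2 * j + ((k : ℝ) - idx) + 1) /
          ((((k : ℝ) - idx) - 1) * (2 * j + ((k : ℝ) - idx)) + 1)) k
    rw [step2]
    have step3 : ∏ idx ∈ Finset.range k, (((k : ℝ) - idx) * (2 * j + ((k : ℝ) - idx) + 1) /
          ((((k : ℝ) - idx) - 1) * (2 * j + ((k : ℝ) - idx)) + 1))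
        = ∏ idx ∈ Finset.range k,
            (((idx : ℝ) + 1) * (2 * j + idx + 2) / ((idx : ℝ) * (2 * j + idx + 1) + 1)) := by
      rw [← Finset.prod_range_reflect]
      refine Finset.prod_congr rfl fun idx hidx => ?_
      have hidx' : idx < k := Finset.mem_range.mp hidx
      have hcast : ((k - 1 - idx : ℕ) : ℝ) = (k : ℝ) - 1 - idx := by
        have h1 : idx + 1 ≤ k := hidx'
        push_cast [Nat.cast_sub (by omega : idx ≤ k - 1), Nat.cast_sub (by omega : 1 ≤ k)]
        ring
      rw [hcast]
      have he1 : (k:ℝ) - ((k:ℝ) - 1 - idx) = (idx:ℝ) + 1 := by ring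
      rw [he1]
      congr 1 <;> ring
    rw [step3]
    exact chTerm_prod_le (2 * j) hA0 k hk
  -- final real estimate
  have hE : Real.exp (-(T / (2 * n))) < 1 / n := by
    rw [lt_div_iff₀ hN0]
    linarith [hcase]
  have hT0 : 0 ≤ T := by
    have h1 : Real.exp (-(T / (2 * n))) < 1 :=
      lt_of_lt_of_le hE (by rw [div_le_one hN0]; linarith)
    have h2 : -(T / (2 * (n : ℝ))) < 0 := Real.exp_lt_one_iff.mp h1
    have h3 : 0 < T / (2 * (n : ℝ)) := by linarith
    rw [div_pos_iff] at h3
    rcases h3 with ⟨h4, _⟩ | ⟨_, h5⟩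
    · linarith
    · linarith
  -- chain of bounds
  have hchain : P {ω | T < ∑ i, (X i ω : ℝ)} ≤
      ENNReal.ofReal ((z ^ T)⁻¹ * ((k : ℝ) * (2 * j + k + 1))) := by
    calc P {ω | T < ∑ i, (X i ω : ℝ)} ≤ ε⁻¹ * ∫⁻ ω, f ω ∂P := hmarkov
      _ = ENNReal.ofReal ((z ^ T)⁻¹) *
          ENNReal.ofReal (∏ i, (n : ℝ) * p i / ((n : ℝ) * p i - 1)) := by
          rw [hprod, hεdef, ← ENNReal.ofReal_inv_of_pos hzT]
      _ = ENNReal.ofReal ((z ^ T)⁻¹ * ∏ i, (n : ℝ) * p i / ((n : ℝ) * p i - 1)) :=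
          (ENNReal.ofReal_mul (by positivity)).symm
      _ ≤ ENNReal.ofReal ((z ^ T)⁻¹ * ((k : ℝ) * (2 * j + k + 1))) :=
          ENNReal.ofReal_le_ofReal
            (mul_le_mul_of_nonneg_left hprodR (by positivity))
  -- final real estimate
  have hlogz : 1 / (n : ℝ) ≤ Real.log z := by
    have hpos : (0 : ℝ) < ((n : ℝ) - 1) / n := by
      apply div_pos (by linarith) hN0
    have hlog1 : Real.log (((n : ℝ) - 1) / n) ≤ -(1 / n) := by
      have h1 := Real.log_le_sub_one_of_pos hpos
      have heq : ((n : ℝ) - 1) / n - 1 = -(1 / n) := by field_simp; ring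
      linarith
    have hzinv : z = (((n : ℝ) - 1) / n)⁻¹ := by rw [hzdef, inv_div]
    rw [hzinv, Real.log_inv]
    linarith
  have h1 : (z ^ T)⁻¹ ≤ Real.exp (-(T / n)) := by
    rw [Real.rpow_def_of_pos hzpos, ← Real.exp_neg]
    apply Real.exp_le_exp.mpr
    have := mul_le_mul_of_nonneg_right hlogz hT0
    have heq : 1 / (n : ℝ) * T = T / n := by ring
    nlinarith [this]
  have h2 : (k : ℝ) * (2 * j + k + 1) ≤ (n : ℝ) ^ 2 / 2 := by
    nlinarith [sq_nonneg ((n : ℝ) - 2 * (k : ℝ)), hk1, hA0]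
  have hexp2 : Real.exp (-(T / (n : ℝ)))
      = Real.exp (-(T / (2 * n))) * Real.exp (-(T / (2 * n))) := by
    rw [← Real.exp_add]
    congr 1
    field_simp
    ring
  have hreal : (z ^ T)⁻¹ * ((k : ℝ) * (2 * j + k + 1)) ≤ (n : ℝ) * Real.exp (-(T / (2 * n))) := by
    calc (z ^ T)⁻¹ * ((k : ℝ) * (2 * j + k + 1))
        ≤ Real.exp (-(T / n)) * ((n : ℝ) ^ 2 / 2) := by
          apply mul_le_mul h1 h2 (by positivity) (by positivity)
      _ ≤ (n : ℝ) * Real.exp (-(T / (2 * n))) := by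
          rw [hexp2]
          nlinarith [hcase.le, Real.exp_pos (-(T / (2 * (n : ℝ)))),
            mul_nonneg hN0.le (Real.exp_pos (-(T / (2 * (n : ℝ))))).le]
  exact ENNReal.toReal_le_of_le_ofReal (by positivity)
    (hchain.trans (ENNReal.ofReal_le_ofReal hreal))
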